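/- For every n ≡ 2 (mod 4) with n > 2, the balanced shuffle-cube BSQ_n contains a Hamiltonian cycle, i.e., a cycle passing through every vertex of BSQ_n exactly once. -/

import Mathlib

def bitOf {n : ℕ} (u : Fin n → Bool) (i : ℕ) : Bool :=
  if h : i < n then u ⟨i, h⟩ else false

def lowRel {n : ℕ} (u v : Fin n → Bool) : Prop :=
  ∃ i < 2, bitOf u i ≠ bitOf v i ∧ ∀ k, k ≠ i → bitOf u k = bitOf v k

def blockAgree {n : ℕ} (u v : Fin n → Bool) (j : ℕ) : Prop :=
  ∀ k, (k < 4*j - 2 ∨ 4*j + 1 < k) → bitOf u k = bitOf v k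

/-- The pair of bits `u_{i+1} u_i` read as an integer in `{0,1,2,3}` (an element of `ZMod 4`). -/
def pairVal {n : ℕ} (u : Fin n → Bool) (i : ℕ) : ZMod 4 :=
  ((2 * (bitOf u (i+1)).toNat + (bitOf u i).toNat : ℕ) : ZMod 4)

def bsqRel {n : ℕ} (u v : Fin n → Bool) : Prop :=
  lowRel u v ∨ ∃ j, 1 ≤ j ∧ j ≤ (n-2)/4 ∧ blockAgree u v j ∧
    (pairVal v (4*j) = pairVal u (4*j) + 1 ∨ pairVal v (4*j) = pairVal u (4*j) - 1) ∧
    (pairVal v (4*j-2) = pairVal u (4*j-2) + (if bitOf u (4*j) then -1 else 1) ∨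
      pairVal v (4*j-2) = pairVal u (4*j-2))

/-- The `n`-dimensional balanced shuffle-cube `BSQ_n`. -/
def BSQ (n : ℕ) : SimpleGraph (Fin n → Bool) := SimpleGraph.fromRel bsqRel


open SimpleGraph List

section Framework
variable {α : Type*} {β : Type*} {G : SimpleGraph α} {H : SimpleGraph β}

/-- Hamiltonian cycle presented as a starting vertex plus the list of remaining vertices. -/
def HCL (G : SimpleGraph α) (a : α) (l : List α) : Prop :=
  List.Chain G.Adj a (l ++ [a]) ∧ (a :: l).Nodup ∧ (∀ v, v ∈ a :: l) ∧ 2 ≤ l.length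

/-- Build a walk from a chain of adjacencies. -/
def mkWalk (G : SimpleGraph α) : (a : α) → (l : List α) → (b : α) →
    List.Chain G.Adj a (l ++ [b]) → G.Walk a b
  | _, [], _, h => SimpleGraph.Walk.cons (List.isChain_pair.mp h) SimpleGraph.Walk.nil
  | _, c :: l, b, h =>
      SimpleGraph.Walk.cons (List.chain_cons.mp h).1 (mkWalk G c l b (List.chain_cons.mp h).2)

lemma mkWalk_support (G : SimpleGraph α) : ∀ (a : α) (l : List α) (b : α)
    (h : List.Chain G.Adj a (l ++ [b])), (mkWalk G a l b h).support = a :: (l ++ [b])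
  | _, [], _, _ => rfl
  | a, c :: l, b, h => by
      simp [mkWalk, SimpleGraph.Walk.support_cons, mkWalk_support G c l b]
      exact mkWalk_support G c l b _

lemma hcl_ham [DecidableEq α] {a : α} {l : List α} (h : HCL G a l) :
    ∃ p : G.Walk a a, p.IsHamiltonianCycle := by
  obtain ⟨hchain, hnodup, hcover, hlen⟩ := h
  obtain ⟨c, l₂, rfl⟩ : ∃ c l₂, l = c :: l₂ := by
    cases l with
    | nil => simp at hlen
    | cons c l₂ => exact ⟨c, l₂, rfl⟩
  rw [List.cons_append] at hchain
  obtain ⟨hac, hchain⟩ := List.isChain_cons_cons.mp hchain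
  set Q : G.Walk c a := mkWalk G c l₂ a hchain with hQ
  have hsupp : Q.support = (c :: l₂) ++ [a] := mkWalk_support G c l₂ a hchain
  have hperm : ((c :: l₂) ++ [a]).Perm (a :: c :: l₂) := List.perm_append_singleton _ _
  have hsuppnd : Q.support.Nodup := by rw [hsupp]; exact hperm.nodup_iff.mpr hnodup
  have hQpath : Q.IsPath := SimpleGraph.Walk.IsPath.mk' hsuppnd
  set W : G.Walk a a := SimpleGraph.Walk.cons hac Q with hW
  refine ⟨W, ?_⟩
  have hanodup := List.nodup_cons.mp hnodup
  have hane : a ≠ c ∧ a ∉ l₂ := by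
    constructor
    · rintro rfl; exact hanodup.1 (List.mem_cons_self)
    · intro hmem; exact hanodup.1 (List.mem_cons_of_mem _ hmem)
  constructor
  · rw [SimpleGraph.Walk.cons_isCycle_iff]
    refine ⟨hQpath, ?_⟩
    intro hmemE
    obtain ⟨d, l₃, rfl⟩ : ∃ d l₃, l₂ = d :: l₃ := by
      cases l₂ with
      | nil => simp at hlen
      | cons d l₃ => exact ⟨d, l₃, rfl⟩
    have hQ2 : Q = SimpleGraph.Walk.cons (List.chain_cons.mp hchain).1
        (mkWalk G d l₃ a (List.chain_cons.mp hchain).2) := rfl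
    rw [hQ2, SimpleGraph.Walk.edges_cons, List.mem_cons] at hmemE
    rcases hmemE with heq | hmemE
    · rw [Sym2.eq_iff] at heq
      rcases heq with ⟨rfl, _⟩ | ⟨rfl, _⟩
      · exact hane.1 rfl
      · exact hane.2 (List.mem_cons_self)
    · have hc : c ∈ (mkWalk G d l₃ a (List.chain_cons.mp hchain).2).support :=
        SimpleGraph.Walk.fst_mem_support_of_mem_edges _ (by rwa [Sym2.eq_swap] at hmemE)
      rw [mkWalk_support G d l₃ a (List.chain_cons.mp hchain).2] at hc
      have hcn : c ∉ d :: (l₃ ++ [a]) := by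
        have h2 : (c :: (d :: l₃ ++ [a])).Nodup := by
          simpa using hperm.nodup_iff.mpr hnodup
        simpa using (List.nodup_cons.mp h2).1
      exact hcn hc
  · -- tail hamiltonian
    intro v
    have hnil : ¬ W.Nil := SimpleGraph.Walk.not_nil_cons
    have hts : W.tail.support = Q.support := by
      rw [SimpleGraph.Walk.support_tail_of_not_nil W hnil, hW, SimpleGraph.Walk.support_cons,
        List.tail_cons]
    rw [hts, hsupp]
    have hv : v ∈ (c :: l₂) ++ [a] := hperm.mem_iff.mpr (hcover v)
    exact List.count_eq_one_of_mem (hperm.nodup_iff.mpr hnodup) hv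

lemma HCL.map_equiv (e : α ≃ β) (he : ∀ u v, H.Adj (e u) (e v) ↔ G.Adj u v)
    {a : α} {l : List α} (h : HCL G a l) : HCL H (e a) (l.map e) := by
  obtain ⟨hchain, hnodup, hcover, hlen⟩ := h
  refine ⟨?_, ?_, ?_, by simpa using hlen⟩
  · have : List.Chain (fun u v => H.Adj (e u) (e v)) a (l ++ [a]) :=
      List.IsChain.imp (fun u v huv => (he u v).mpr huv) hchain
    have := (List.isChain_cons_map (e : α → β)).mpr this
    show List.IsChain H.Adj (e a :: (l.map e ++ [e a]))
    simpa using this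
  · have : (List.map e (a :: l)).Nodup := hnodup.map e.injective
    simpa using this
  · intro v
    have := hcover (e.symm v)
    rcases List.mem_cons.mp this with h1 | h1
    · have : v = e a := by rw [← h1]; simp
      rw [this]; exact List.mem_cons_self
    · exact List.mem_cons_of_mem _ (List.mem_map.mpr ⟨_, h1, by simp⟩)

def snake : List α → List β → List (α × β)
  | _, [] => []
  | l, y :: ys => (l.map (·, y)) ++ snake l.reverse ys

lemma mem_snake : ∀ (ys : List β) (l : List α) (x : α × β),
    x ∈ snake l ys ↔ x.1 ∈ l ∧ x.2 ∈ ys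
  | [], l, x => by simp [snake]
  | y :: ys, l, x => by
    simp [snake, mem_snake ys l.reverse x, List.mem_map]
    constructor
    · rintro (⟨a, ha, rfl⟩ | ⟨h1, h2⟩)
      · exact ⟨ha, Or.inl rfl⟩
      · exact ⟨h1, Or.inr h2⟩
    · rintro ⟨h1, rfl | h2⟩
      · exact Or.inl ⟨x.1, h1, rfl⟩
      · exact Or.inr ⟨h1, h2⟩

lemma snake_length : ∀ (ys : List β) (l : List α),
    (snake l ys).length = l.length * ys.length
  | [], l => by simp [snake]
  | y :: ys, l => by
    simp [snake, snake_length ys l.reverse]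
    ring

lemma snake_nodup : ∀ (ys : List β) (l : List α), l.Nodup → ys.Nodup →
    (snake l ys).Nodup
  | [], l, _, _ => by simp [snake]
  | y :: ys, l, hl, hys => by
    rw [snake, List.nodup_append']
    obtain ⟨hy, hys'⟩ := List.nodup_cons.mp hys
    refine ⟨hl.map fun a b hab => by simpa using hab, snake_nodup ys l.reverse (by simpa using hl) hys', ?_⟩
    intro x hx1 hx2
    obtain ⟨a, _, rfl⟩ := List.mem_map.mp hx1
    have := (mem_snake ys l.reverse _).mp hx2
    exact hy this.2

lemma chain'_rev {l : List α} (h : l.Chain' G.Adj) : l.reverse.Chain' G.Adj :=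
  List.isChain_reverse.mpr (List.IsChain.imp (fun _ _ hab => hab.symm) h)

lemma snake_spec : ∀ (ys : List β) (l : List α) (hl : l ≠ []) (hy : ys ≠ []),
    l.Chain' G.Adj → ys.Chain' H.Adj →
    (snake l ys).Chain' (G □ H).Adj ∧
    (snake l ys).head? = some (l.head hl, ys.head hy) ∧
    ∃ z, (z = l.head hl ∨ z = l.getLast hl) ∧
      (snake l ys).getLast? = some (z, ys.getLast hy)
  | [], _, _, hy, _, _ => absurd rfl hy
  | [y], l, hl, hy, hcl, _ => by
    refine ⟨?_, ?_, l.getLast hl, Or.inr rfl, ?_⟩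
    · show ((l.map (·, y)) ++ snake l.reverse []).Chain' (G □ H).Adj
      rw [show snake l.reverse ([] : List β) = [] from rfl, List.append_nil]
      exact (List.isChain_map _).mpr (List.IsChain.imp (fun a b hab => SimpleGraph.boxProd_adj_left.mpr hab) hcl)
    · show ((l.map (·, y)) ++ snake l.reverse []).head? = _
      rw [show snake l.reverse ([] : List β) = [] from rfl, List.append_nil, List.head?_map,
        List.head?_eq_head hl]
      rfl
    · show ((l.map (·, y)) ++ snake l.reverse []).getLast? = _
      rw [show snake l.reverse ([] : List β) = [] from rfl, List.append_nil, List.getLast?_map,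
        List.getLast?_eq_getLast hl]
      rfl
  | y :: w :: ys, l, hl, hy, hcl, hcy => by
    obtain ⟨hyw, hcy'⟩ := List.isChain_cons_cons.mp hcy
    have hrl : l.reverse ≠ [] := by simpa using hl
    obtain ⟨ih1, ih2, z, hz, ih3⟩ :=
      snake_spec (w :: ys) l.reverse hrl (by simp) (chain'_rev hcl) hcy'
    have hrevhead : l.reverse.head hrl = l.getLast hl := by
      rw [← List.head_reverse]
    have hrevlast : l.reverse.getLast hrl = l.head hl := by
      rw [← List.getLast_reverse]
    have hmaplast : (l.map (·, y)).getLast? = some (l.getLast hl, y) := by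
      rw [List.getLast?_map, List.getLast?_eq_getLast hl]; rfl
    have hsnakene : snake l.reverse (w :: ys) ≠ [] := by
      intro hcon
      rw [hcon] at ih2
      simp at ih2
    refine ⟨?_, ?_, z, ?_, ?_⟩
    · show ((l.map (·, y)) ++ snake l.reverse (w :: ys)).IsChain (G □ H).Adj
      rw [List.isChain_append]
      refine ⟨(List.isChain_map _).mpr (List.IsChain.imp (fun a b hab => SimpleGraph.boxProd_adj_left.mpr hab) hcl),
        ih1, ?_⟩
      intro x hx p hp
      rw [hmaplast] at hx
      rw [ih2] at hp
      simp only [Option.mem_def, Option.some_inj] at hx hp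
      subst hx; subst hp
      rw [hrevhead]
      exact SimpleGraph.boxProd_adj_right.mpr (by simpa using hyw)
    · show ((l.map (·, y)) ++ snake l.reverse (w :: ys)).head? = _
      rw [List.head?_append_of_ne_nil, List.head?_map, List.head?_eq_head hl]
      rfl
      · simpa using hl
    · rcases hz with hz | hz
      · right; rw [hz, hrevhead]
      · left; rw [hz, hrevlast]
    · show ((l.map (·, y)) ++ snake l.reverse (w :: ys)).getLast? = _
      rw [List.getLast?_append_of_ne_nil _ hsnakene, ih3]
      congr 1

lemma chain_getLast' {R : α → α → Prop} : ∀ (l : List α) (a b : α),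
    List.Chain R a (l ++ [b]) → ∀ z ∈ l.getLast?, R z b
  | [], _, _, _, _, hz => by simp at hz
  | [c], a, b, hch, z, hz => by
    simp only [List.getLast?_singleton, Option.mem_def, Option.some_inj] at hz
    subst hz
    exact (List.isChain_cons_cons.mp (List.isChain_cons_cons.mp hch).2).1
  | c :: d :: l, a, b, hch, z, hz => by
    rw [List.cons_append] at hch
    replace hch := List.isChain_cons_cons.mp hch
    rw [List.getLast?_cons_cons] at hz
    exact chain_getLast' (d :: l) c b hch.2 z hz

lemma chain_getLast {R : α → α → Prop} (l : List α) (a b : α)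
    (hch : List.Chain R a (l ++ [b])) (h : l ≠ []) : R (l.getLast h) b :=
  chain_getLast' l a b hch _ (List.getLast?_eq_getLast h)

lemma HCL.boxProd {a : α} {b : β} {l : List α} {m : List β}
    (hG : HCL G a l) (hH : HCL H b m) :
    HCL (G □ H) (a, b) (snake l (b :: m) ++ m.reverse.map (fun y => (a, y))) := by
  classical
  obtain ⟨hGc, hGn, hGcov, hGl⟩ := hG
  obtain ⟨hHc, hHn, hHcov, hHl⟩ := hH
  have hlne : l ≠ [] := by rintro rfl; simp at hGl
  have hmne : m ≠ [] := by rintro rfl; simp at hHl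
  have hanl : a ∉ l := (List.nodup_cons.mp hGn).1
  have hbnm : b ∉ m := (List.nodup_cons.mp hHn).1
  have hln : l.Nodup := (List.nodup_cons.mp hGn).2
  -- chains
  have hGc' : List.Chain' G.Adj ((a :: l) ++ [a]) := hGc
  have hcl : List.Chain' G.Adj l :=
    (hGc'.prefix (List.prefix_append (a :: l) [a])).tail
  have hcbm : List.Chain' H.Adj (b :: m) := by
    have : List.Chain' H.Adj ((b :: m) ++ [b]) := by rw [List.cons_append]; exact hHc
    exact this.prefix (by simp)
  have hadj_head : G.Adj a (l.head hlne) := by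
    have h2 : List.Chain' G.Adj (a :: (l ++ [a])) := hGc'
    apply h2.rel_head?
    rw [List.head?_append_of_ne_nil l hlne, List.head?_eq_head hlne]
    rfl
  have hadj_last : G.Adj (l.getLast hlne) a := chain_getLast l a a hGc hlne
  have hbm_last : (b :: m).getLast (by simp) = m.getLast hmne := List.getLast_cons hmne
  obtain ⟨hs1, hs2, z, hz, hs3⟩ :=
    snake_spec (b :: m) l hlne (by simp) hcl hcbm
  have hsne : snake l (b :: m) ≠ [] := by
    intro hcon; rw [hcon] at hs2; simp at hs2
  have hTeq : (snake l (b :: m) ++ m.reverse.map (fun y => (a, y))) ++ [(a, b)]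
      = snake l (b :: m) ++ ((b :: m).reverse.map (fun y => (a, y))) := by
    simp [List.append_assoc]
  have hcolchain : List.Chain' (G □ H).Adj ((b :: m).reverse.map (fun y => (a, y))) :=
    (List.isChain_map _).mpr (List.IsChain.imp
      (fun x y hxy => SimpleGraph.boxProd_adj_right.mpr hxy) (chain'_rev hcbm))
  have hrevne : (b :: m).reverse ≠ [] := by simp
  have hrevhead : (b :: m).reverse.head hrevne = m.getLast hmne := by
    rw [List.head_reverse, hbm_last]
  refine ⟨?_, ?_, ?_, ?_⟩
  · -- chain
    show List.IsChain (G □ H).Adj ((a, b) :: _)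
    rw [hTeq]
    rw [List.isChain_cons]
    constructor
    · intro p hp
      rw [List.head?_append_of_ne_nil _ hsne, hs2] at hp
      simp only [Option.mem_def, Option.some_inj] at hp
      subst hp
      exact SimpleGraph.boxProd_adj_left.mpr hadj_head
    · rw [List.isChain_append]
      refine ⟨hs1, hcolchain, ?_⟩
      intro x hx p hp
      rw [hs3] at hx
      rw [List.head?_map, List.head?_eq_head hrevne] at hp
      simp only [Option.mem_def, Option.some_inj, Option.map_some] at hx hp
      subst hx; subst hp
      rw [hrevhead, hbm_last]
      have hza : G.Adj z a := by
        rcases hz with rfl | rfl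
        · exact hadj_head.symm
        · exact hadj_last
      exact SimpleGraph.boxProd_adj_left.mpr hza
  · -- nodup
    rw [List.nodup_cons]
    constructor
    · intro hmem
      rcases List.mem_append.mp hmem with hmem | hmem
      · exact hanl ((mem_snake _ _ _).mp hmem).1
      · obtain ⟨y, hy, heq⟩ := List.mem_map.mp hmem
        have : y = b := congrArg Prod.snd heq
        subst this
        exact hbnm (List.mem_reverse.mp hy)
    · rw [List.nodup_append']
      refine ⟨snake_nodup _ _ hln hHn, ?_, ?_⟩
      · exact (List.nodup_reverse.mpr (List.nodup_cons.mp hHn).2).map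
          (fun x y hxy => by simpa using hxy)
      · intro x hx1 hx2
        obtain ⟨y, _, rfl⟩ := List.mem_map.mp hx2
        exact hanl ((mem_snake _ _ _).mp hx1).1
  · -- coverage
    rintro ⟨x, y⟩
    rcases List.mem_cons.mp (hGcov x) with rfl | hx
    · rcases List.mem_cons.mp (hHcov y) with rfl | hy
      · exact List.mem_cons_self
      · refine List.mem_cons_of_mem _ (List.mem_append.mpr (Or.inr ?_))
        exact List.mem_map.mpr ⟨y, List.mem_reverse.mpr hy, rfl⟩
    · refine List.mem_cons_of_mem _ (List.mem_append.mpr (Or.inl ?_))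
      exact (mem_snake _ _ _).mpr ⟨hx, hHcov y⟩
  · -- length
    rw [List.length_append, snake_length]
    have h2 : 2 ≤ l.length := hGl
    have : 2 * 1 ≤ l.length * (b :: m).length :=
      Nat.mul_le_mul h2 (by simp)
    omega

end Framework

open SimpleGraph

/-! ### generic bit lemmas -/

lemma bitOf_ge {n : ℕ} (u : Fin n → Bool) {k : ℕ} (hk : n ≤ k) : bitOf u k = false :=
  dif_neg (by omega)

lemma bitOf_fin {n : ℕ} (u : Fin n → Bool) (i : Fin n) : bitOf u i.1 = u i := by
  rw [bitOf, dif_pos i.2]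

/-! ### the block graph -/

def bRel (u v : Fin 4 → Bool) : Prop :=
  (pairVal v 2 = pairVal u 2 + 1 ∨ pairVal v 2 = pairVal u 2 - 1) ∧
  (pairVal v 0 = pairVal u 0 + (if bitOf u 2 then -1 else 1) ∨ pairVal v 0 = pairVal u 0)

instance (u v : Fin 4 → Bool) : Decidable (bRel u v) :=
  inferInstanceAs (Decidable (_ ∧ _))

def Bgraph : SimpleGraph (Fin 4 → Bool) := SimpleGraph.fromRel bRel

instance : DecidableRel Bgraph.Adj := fun u v =>
  inferInstanceAs (Decidable (u ≠ v ∧ (bRel u v ∨ bRel v u)))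

def Bstart : Fin 4 → Bool := ![false,false,false,false]

def Btail : List (Fin 4 → Bool) :=
  [![false,false,true,false], ![true,true,false,false],
   ![true,true,true,false], ![false,true,false,false], ![false,true,true,false],
   ![true,false,false,false], ![true,false,true,false], ![false,false,false,true],
   ![false,false,true,true], ![true,true,false,true], ![true,true,true,true],
   ![false,true,false,true], ![false,true,true,true], ![true,false,false,true],
   ![true,false,true,true]]

lemma hclB : HCL Bgraph Bstart Btail := by
  refine ⟨?_, by decide, by decide, by decide⟩
  show List.IsChain Bgraph.Adj (Bstart :: (Btail ++ [Bstart]))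
  simp only [Bstart, Btail, List.cons_append, List.nil_append, List.chain_cons, and_true]
  and_intros <;> first | exact List.Chain.nil | decide

/-! ### splitting -/

variable {n : ℕ}

def lowPart (u : Fin (n+4) → Bool) : Fin n → Bool := fun i => u ⟨i.1, by omega⟩
def highPart (u : Fin (n+4) → Bool) : Fin 4 → Bool := fun t => u ⟨n + t.1, by omega⟩
def glue (a : Fin n → Bool) (b : Fin 4 → Bool) : Fin (n+4) → Bool :=
  fun i => if h : (i : ℕ) < n then a ⟨i, h⟩ else b ⟨i.1 - n, by omega⟩

def esplit (n : ℕ) : (Fin (n+4) → Bool) ≃ (Fin n → Bool) × (Fin 4 → Bool) where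
  toFun u := (lowPart u, highPart u)
  invFun p := glue p.1 p.2
  left_inv u := by
    funext i
    simp only [glue]
    split
    next h => rfl
    next h =>
      simp only [highPart]
      exact congrArg u (Fin.ext (show n + ((i:ℕ) - n) = (i:ℕ) by omega))
  right_inv p := by
    refine Prod.ext ?_ ?_
    · funext i
      simp only [lowPart, glue]
      rw [dif_pos i.2]
    · funext i
      simp only [highPart, glue]
      rw [dif_neg (show ¬ (n + i.1 < n) by omega)]
      exact congrArg p.2 (Fin.ext (show (n + (i:ℕ)) - n = (i:ℕ) by omega))

lemma bitOf_low (u : Fin (n+4) → Bool) {k : ℕ} (hk : k < n) :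
    bitOf (lowPart u) k = bitOf u k := by
  rw [bitOf, dif_pos hk, bitOf, dif_pos (show k < n + 4 by omega)]
  rfl

lemma bitOf_high (u : Fin (n+4) → Bool) {t : ℕ} (ht : t < 4) :
    bitOf (highPart u) t = bitOf u (n + t) := by
  rw [bitOf, dif_pos ht, bitOf, dif_pos (show n + t < n + 4 by omega)]
  rfl

lemma pairVal_low (u : Fin (n+4) → Bool) {i : ℕ} (hi : i + 1 < n) :
    pairVal (lowPart u) i = pairVal u i := by
  rw [pairVal, pairVal, bitOf_low u (by omega), bitOf_low u (by omega)]

lemma pairVal_high (u : Fin (n+4) → Bool) {t : ℕ} (ht : t + 1 < 4) :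
    pairVal (highPart u) t = pairVal u (n + t) := by
  rw [pairVal, pairVal, bitOf_high u (by omega), bitOf_high u (by omega)]
  rfl

lemma high_eq_of_agree {u v : Fin (n+4) → Bool}
    (h : ∀ k, n ≤ k → k < n + 4 → bitOf u k = bitOf v k) : highPart u = highPart v := by
  funext t
  have := h (n + t.1) (by omega) (by omega)
  rwa [← bitOf_high u t.2, ← bitOf_high v t.2, bitOf_fin, bitOf_fin] at this

lemma low_eq_of_agree {u v : Fin (n+4) → Bool}
    (h : ∀ k, k < n → bitOf u k = bitOf v k) : lowPart u = lowPart v := by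
  funext i
  have := h i.1 i.2
  rwa [← bitOf_low u i.2, ← bitOf_low v i.2, bitOf_fin, bitOf_fin] at this

lemma agree_of_high_eq {u v : Fin (n+4) → Bool} (h : highPart u = highPart v)
    {k : ℕ} (hk1 : n ≤ k) (hk2 : k < n + 4) : bitOf u k = bitOf v k := by
  have h1 : bitOf (highPart u) (k - n) = bitOf (highPart v) (k - n) := by rw [h]
  rw [bitOf_high u (by omega), bitOf_high v (by omega),
    show n + (k - n) = k by omega] at h1
  exact h1

lemma agree_of_low_eq {u v : Fin (n+4) → Bool} (h : lowPart u = lowPart v)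
    {k : ℕ} (hk : k < n) : bitOf u k = bitOf v k := by
  have h1 : bitOf (lowPart u) k = bitOf (lowPart v) k := by rw [h]
  rwa [bitOf_low u hk, bitOf_low v hk] at h1

lemma bsq_split (hn : n % 4 = 2) (u v : Fin (n+4) → Bool) :
    bsqRel u v ↔ (highPart u = highPart v ∧ bsqRel (lowPart u) (lowPart v)) ∨
      (lowPart u = lowPart v ∧ bRel (highPart u) (highPart v)) := by
  have hn2 : 2 ≤ n := by omega
  constructor
  · rintro (⟨i, hi, hne, hag⟩ | ⟨j, hj1, hj2, hag, hp1, hp2⟩)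
    · left
      refine ⟨high_eq_of_agree fun k hk _ => hag k (by omega), Or.inl ⟨i, hi, ?_, ?_⟩⟩
      · rwa [bitOf_low u (by omega), bitOf_low v (by omega)]
      · intro k hk
        by_cases hkn : k < n
        · rw [bitOf_low u hkn, bitOf_low v hkn]; exact hag k hk
        · rw [bitOf_ge _ (by omega), bitOf_ge _ (by omega)]
    · have hj2' : j ≤ (n + 4 - 2) / 4 := hj2
      by_cases hj : j ≤ (n - 2) / 4
      · have hjn : 4 * j + 1 < n := by omega
        left
        refine ⟨high_eq_of_agree fun k hk _ => hag k (Or.inr (by omega)), Or.inr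
          ⟨j, hj1, hj, ?_, ?_, ?_⟩⟩
        · intro k hk
          by_cases hkn : k < n
          · rw [bitOf_low u hkn, bitOf_low v hkn]; exact hag k hk
          · rw [bitOf_ge _ (by omega), bitOf_ge _ (by omega)]
        · rwa [pairVal_low v (by omega), pairVal_low u (by omega)]
        · rwa [pairVal_low v (by omega), pairVal_low u (by omega),
            bitOf_low u (by omega)]
      · have hjeq : 4 * j = n + 2 := by omega
        right
        refine ⟨low_eq_of_agree fun k hk => hag k (Or.inl (by omega)), ?_, ?_⟩
        · rw [pairVal_high v (by omega), pairVal_high u (by omega),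
            show n + 2 = 4 * j from hjeq.symm]
          exact hp1
        · rw [pairVal_high v (by omega), pairVal_high u (by omega),
            bitOf_high u (by omega), show n + 0 = 4 * j - 2 by omega,
            show n + 2 = 4 * j from hjeq.symm]
          exact hp2
  · rintro (⟨htop, hlow⟩ | ⟨hlow, htop⟩)
    · rcases hlow with ⟨i, hi, hne, hag⟩ | ⟨j, hj1, hj2, hag, hp1, hp2⟩
      · left
        refine ⟨i, hi, ?_, ?_⟩
        · rwa [bitOf_low u (by omega), bitOf_low v (by omega)] at hne
        · intro k hk
          by_cases hkn : k < n
          · have := hag k hk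
            rwa [bitOf_low u hkn, bitOf_low v hkn] at this
          · by_cases hk4 : k < n + 4
            · exact agree_of_high_eq htop (by omega) hk4
            · rw [bitOf_ge _ (by omega), bitOf_ge _ (by omega)]
      · right
        have hjn : 4 * j + 1 < n := by omega
        refine ⟨j, hj1, by omega, ?_, ?_, ?_⟩
        · intro k hk
          by_cases hkn : k < n
          · have := hag k hk
            rwa [bitOf_low u hkn, bitOf_low v hkn] at this
          · by_cases hk4 : k < n + 4
            · exact agree_of_high_eq htop (by omega) hk4
            · rw [bitOf_ge _ (by omega), bitOf_ge _ (by omega)]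
        · rwa [pairVal_low v (by omega), pairVal_low u (by omega)] at hp1
        · rwa [pairVal_low v (by omega), pairVal_low u (by omega),
            bitOf_low u (by omega)] at hp2
    · right
      obtain ⟨hp1, hp2⟩ := htop
      refine ⟨(n - 2) / 4 + 1, by omega, by omega, ?_, ?_, ?_⟩
      · intro k hk
        have hjeq : 4 * ((n - 2) / 4 + 1) = n + 2 := by omega
        rcases hk with hk | hk
        · exact agree_of_low_eq hlow (by omega)
        · rw [bitOf_ge _ (by omega), bitOf_ge _ (by omega)]
      · rw [pairVal_high v (by omega), pairVal_high u (by omega)] at hp1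
        rwa [show 4 * ((n - 2) / 4 + 1) = n + 2 by omega]
      · rw [pairVal_high v (by omega), pairVal_high u (by omega),
          bitOf_high u (by omega)] at hp2
        rwa [show 4 * ((n - 2) / 4 + 1) - 2 = n + 0 by omega,
          show 4 * ((n - 2) / 4 + 1) = n + 2 by omega]

lemma eq_iff_parts (u v : Fin (n+4) → Bool) :
    u = v ↔ lowPart u = lowPart v ∧ highPart u = highPart v := by
  constructor
  · rintro rfl; exact ⟨rfl, rfl⟩
  · rintro ⟨h1, h2⟩
    have := congrArg (esplit n).symm (show esplit n u = esplit n v from Prod.ext h1 h2)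
    simpa using this

lemma adj_split (hn : n % 4 = 2) (u v : Fin (n+4) → Bool) :
    (BSQ (n+4)).Adj u v ↔ ((BSQ n) □ Bgraph).Adj (esplit n u) (esplit n v) := by
  rw [BSQ, SimpleGraph.fromRel_adj, SimpleGraph.boxProd_adj]
  show _ ↔ ((BSQ n).Adj (lowPart u) (lowPart v) ∧ highPart u = highPart v) ∨
    (Bgraph.Adj (highPart u) (highPart v) ∧ lowPart u = lowPart v)
  rw [BSQ, SimpleGraph.fromRel_adj, Bgraph, SimpleGraph.fromRel_adj,
    bsq_split hn u v, bsq_split hn v u]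
  constructor
  · rintro ⟨hne, h⟩
    have hne' : ¬(lowPart u = lowPart v ∧ highPart u = highPart v) :=
      fun h' => hne ((eq_iff_parts u v).mpr h')
    rcases h with (⟨ht, hb⟩ | ⟨hl, hb⟩) | (⟨ht, hb⟩ | ⟨hl, hb⟩)
    · exact Or.inl ⟨⟨fun he => hne' ⟨he, ht⟩, Or.inl hb⟩, ht⟩
    · exact Or.inr ⟨⟨fun he => hne' ⟨hl, he⟩, Or.inl hb⟩, hl⟩
    · exact Or.inl ⟨⟨fun he => hne' ⟨he, ht.symm⟩, Or.inr hb⟩, ht.symm⟩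
    · exact Or.inr ⟨⟨fun he => hne' ⟨hl.symm, he⟩, Or.inr hb⟩, hl.symm⟩
  · rintro (⟨⟨hne, hb⟩, ht⟩ | ⟨⟨hne, hb⟩, hl⟩)
    · refine ⟨fun h' => hne ((eq_iff_parts u v).mp h').1, ?_⟩
      rcases hb with hb | hb
      · exact Or.inl (Or.inl ⟨ht, hb⟩)
      · exact Or.inr (Or.inl ⟨ht.symm, hb⟩)
    · refine ⟨fun h' => hne ((eq_iff_parts u v).mp h').2, ?_⟩
      rcases hb with hb | hb
      · exact Or.inl (Or.inr ⟨hl, hb⟩)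
      · exact Or.inr (Or.inr ⟨hl.symm, hb⟩)

/-! ### base case and assembly -/

lemma adj_low2 (u v : Fin 2 → Bool) (i : ℕ) (hi : i < 2) (hne : bitOf u i ≠ bitOf v i)
    (hoth : bitOf u (1-i) = bitOf v (1-i)) : (BSQ 2).Adj u v := by
  refine (SimpleGraph.fromRel_adj _ u v).mpr ⟨?_, Or.inl (Or.inl ⟨i, hi, hne, ?_⟩)⟩
  · rintro rfl; exact hne rfl
  · intro k hk
    by_cases hk2 : k < 2
    · have hk1 : k = 1 - i := by omega
      rw [hk1]; exact hoth
    · rw [bitOf_ge _ (by omega), bitOf_ge _ (by omega)]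

lemma base2 : HCL (BSQ 2) ![false, false] [![true,false], ![true,true], ![false,true]] := by
  refine ⟨?_, by decide, by decide, by decide⟩
  refine List.Chain.cons ?_ (List.Chain.cons ?_ (List.Chain.cons ?_
    (List.Chain.cons ?_ List.Chain.nil)))
  · exact adj_low2 _ _ 0 (by omega) (by decide) (by decide)
  · exact adj_low2 _ _ 1 (by omega) (by decide) (by decide)
  · exact adj_low2 _ _ 0 (by omega) (by decide) (by decide)
  · exact adj_low2 _ _ 1 (by omega) (by decide) (by decide)

lemma hcl_step (n : ℕ) (hn : n % 4 = 2) (h : ∃ a l, HCL (BSQ n) a l) :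
    ∃ a l, HCL (BSQ (n+4)) a l := by
  obtain ⟨a, l, h⟩ := h
  have hprod := h.boxProd hclB
  have he : ∀ p q, (BSQ (n+4)).Adj ((esplit n).symm p) ((esplit n).symm q) ↔
      ((BSQ n) □ Bgraph).Adj p q := by
    intro p q
    rw [adj_split hn, Equiv.apply_symm_apply, Equiv.apply_symm_apply]
  exact ⟨_, _, hprod.map_equiv (esplit n).symm he⟩

lemma hcl_all : ∀ (k n : ℕ), n = 4 * k + 2 → ∃ a l, HCL (BSQ n) a l := by
  intro k
  induction k with
  | zero =>
    intro n hn
    subst hn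
    exact ⟨_, _, base2⟩
  | succ k ih =>
    intro n hn
    subst hn
    rw [show 4 * (k+1) + 2 = (4*k+2) + 4 by ring]
    exact hcl_step _ (by omega) (ih _ rfl)

/-- For every `n ≡ 2 (mod 4)` with `n > 2`, the balanced shuffle-cube `BSQ_n`
contains a Hamiltonian cycle. -/
theorem BSQ_hamiltonian (n : ℕ) (hn : n % 4 = 2) (hn2 : 2 < n) :
    ∃ (a : Fin n → Bool) (p : (BSQ n).Walk a a), p.IsHamiltonianCycle := by
  obtain ⟨a, l, h⟩ := hcl_all ((n-2)/4) n (by omega)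
  obtain ⟨p, hp⟩ := hcl_ham h
  exact ⟨a, p, hp⟩
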